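/- arXiv:2601.13483 — 2 statements merged into one kernel-verified Lean document; each statement's English description precedes it below -/
import Mathlib

section
/- For every integer r ≥ 1, the set of join-irreducible elements of the product poset 𝓛×[r] is exactly { (a_{i,j}, 1) : i ∈ [n], j ∈ [u_i+1, v_i] } ∪ { ((u_1,…,u_n), k) : k ∈ [2,r] }. -/
namespace LadderPaper

/-- The tuple `a_{i,j}`: entry `t` is `u t` for `t < i` and `max (j + (t - i)) (u t)` for
`t ≥ i` (indices `t ∈ [1,n]`; entries outside `[1,n]` are set to `0`). -/
def atuple (u : ℕ → ℤ) (n i : ℕ) (j : ℤ) : ℕ → ℤ := fun t =>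
  if 1 ≤ t ∧ t ≤ n then
    (if t < i then u t else max (j + ((t : ℤ) - (i : ℤ))) (u t))
  else 0

/-- The tuple `b_{i,j}`: like `a_{i,j}` but with `i`-th entry `j - 1`. -/
def btuple (u : ℕ → ℤ) (n i : ℕ) (j : ℤ) : ℕ → ℤ := fun t =>
  if 1 ≤ t ∧ t ≤ n then
    (if t < i then u t
     else if t = i then j - 1
     else max (j + ((t : ℤ) - (i : ℤ))) (u t))
  else 0

/-- The tuple `(u_1, …, u_n)`. -/
def utuple (u : ℕ → ℤ) (n : ℕ) : ℕ → ℤ := fun t =>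
  if 1 ≤ t ∧ t ≤ n then u t else 0

/-- The lattice `𝓛` of tuples `c` with `u t ≤ c t ≤ v t` for `t ∈ [1,n]`, strictly
increasing entries, and (normalization) `c t = 0` outside `[1,n]`.  It carries the
componentwise (induced product) order. -/
def ladderL (n : ℕ) (u v : ℕ → ℤ) : Set (ℕ → ℤ) :=
  {c | (∀ t, 1 ≤ t → t ≤ n → u t ≤ c t ∧ c t ≤ v t) ∧
       (∀ t, 1 ≤ t → t + 1 ≤ n → c t < c (t + 1)) ∧
       (∀ t, t = 0 ∨ n < t → c t = 0)}

/-- The set `P_𝓛 = { a_{i,j} : i ∈ [n], j ∈ [u_i + 1, v_i] }`. -/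
def PL (n : ℕ) (u v : ℕ → ℤ) : Set (ℕ → ℤ) :=
  {x | ∃ i : ℕ, ∃ j : ℤ, 1 ≤ i ∧ i ≤ n ∧ u i + 1 ≤ j ∧ j ≤ v i ∧ x = atuple u n i j}

/-- The product poset `𝓛 × [r]`. -/
def ladderLr (n : ℕ) (u v : ℕ → ℤ) (r : ℤ) : Set ((ℕ → ℤ) × ℤ) :=
  {p | p.1 ∈ ladderL n u v ∧ 1 ≤ p.2 ∧ p.2 ≤ r}

/-- The set `P_{𝓛×[r]} = { (a_{i,j}, 1) } ∪ { ((u_1,…,u_n), k) : k ∈ [2,r] }`. -/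
def PLr (n : ℕ) (u v : ℕ → ℤ) (r : ℤ) : Set ((ℕ → ℤ) × ℤ) :=
  {p | (p.1 ∈ PL n u v ∧ p.2 = 1) ∨ (p.1 = utuple u n ∧ 2 ≤ p.2 ∧ p.2 ≤ r)}

/-- `ε_i > 1`, with the convention `ε_n > 1` (i.e. `i = n` or `u_{i+1} - u_i > 1`). -/
def epsGt1 (u : ℕ → ℤ) (n i : ℕ) : Prop := i = n ∨ 1 < u (i + 1) - u i

/-- `θ_{i-1} > 1`, with the convention `θ_0 > 1` (i.e. `i = 1` or `v_i - v_{i-1} > 1`). -/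
def thetaGt1 (v : ℕ → ℤ) (i : ℕ) : Prop := i = 1 ∨ 1 < v i - v (i - 1)

/-- Membership in `C = { i ∈ [n-1] : v_i < u_{i+1} } ∪ { n }`. -/
def inC (n : ℕ) (u v : ℕ → ℤ) (i : ℕ) : Prop :=
  (1 ≤ i ∧ i + 1 ≤ n ∧ v i < u (i + 1)) ∨ i = n

/-- The set `C = { i ∈ [n-1] : v_i < u_{i+1} } ∪ { n }`. -/
def Cset (n : ℕ) (u v : ℕ → ℤ) : Set ℕ :=
  {i | 1 ≤ i ∧ i + 1 ≤ n ∧ v i < u (i + 1)} ∪ {n}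

/-- `[p,q]` is one of the blocks `[p_s, q_s]` determined by `C`: `q ∈ C`,
no element of `C` lies in `[p, q-1]`, and either `p = 1` or `p - 1 ∈ C`. -/
def IsBlock (n : ℕ) (u v : ℕ → ℤ) (p q : ℕ) : Prop :=
  1 ≤ p ∧ p ≤ q ∧ q ≤ n ∧ inC n u v q ∧
    (∀ j, p ≤ j → j < q → ¬ inC n u v j) ∧ (p = 1 ∨ inC n u v (p - 1))

/-- `i0 = min { i ∈ [p,q] : ε_i > 1 }` (with the convention `ε_n > 1`). -/
def IsBlockMin (n : ℕ) (u : ℕ → ℤ) (p q i0 : ℕ) : Prop :=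
  p ≤ i0 ∧ i0 ≤ q ∧ epsGt1 u n i0 ∧ ∀ j, p ≤ j → j < i0 → ¬ epsGt1 u n j

/-- The comparability graph of a poset: two distinct elements are adjacent
iff they are comparable. -/
def compGraph (α : Type*) [Preorder α] : SimpleGraph α where
  Adj x y := x ≠ y ∧ (x ≤ y ∨ y ≤ x)
  symm := ⟨fun x y h => ⟨Ne.symm h.1, Or.symm h.2⟩⟩
  loopless := ⟨fun x h => h.1 rfl⟩

/-- A poset is pure if all of its maximal chains have the same cardinality
(equivalently, the same length). -/
def IsPure (α : Type*) [Preorder α] : Prop :=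
  ∀ A B : Set α, IsMaxChain (· ≤ ·) A → IsMaxChain (· ≤ ·) B → A.ncard = B.ncard

/-- Decreasable coordinate. -/
def inD (u : ℕ → ℤ) (c : ℕ → ℤ) (t : ℕ) : Prop :=
  u t < c t ∧ ∀ s, s + 1 = t → 1 ≤ s → c s + 2 ≤ c t

/-- Decrease coordinate `t` by one. -/
def dec (c : ℕ → ℤ) (t : ℕ) : ℕ → ℤ := fun s => if s = t then c t - 1 else c s

section
variable {n : ℕ} {u v : ℕ → ℤ}

lemma utuple_in {t : ℕ} (h1 : 1 ≤ t) (h2 : t ≤ n) : utuple u n t = u t := if_pos ⟨h1, h2⟩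
lemma utuple_out {t : ℕ} (h : ¬ (1 ≤ t ∧ t ≤ n)) : utuple u n t = 0 := if_neg h

lemma atuple_lo {i t : ℕ} {j : ℤ} (h1 : 1 ≤ t) (h2 : t ≤ n) (h : t < i) :
    atuple u n i j t = u t := by
  simp only [atuple]; rw [if_pos ⟨h1, h2⟩, if_pos h]

lemma atuple_hi {i t : ℕ} {j : ℤ} (h1 : 1 ≤ t) (h2 : t ≤ n) (h : i ≤ t) :
    atuple u n i j t = max (j + ((t : ℤ) - (i : ℤ))) (u t) := by
  simp only [atuple]; rw [if_pos ⟨h1, h2⟩, if_neg (by omega)]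

lemma atuple_out {i t : ℕ} {j : ℤ} (h : ¬ (1 ≤ t ∧ t ≤ n)) : atuple u n i j t = 0 := if_neg h

lemma dec_self (c : ℕ → ℤ) (t : ℕ) : dec c t t = c t - 1 := if_pos rfl
lemma dec_other (c : ℕ → ℤ) {t s : ℕ} (h : s ≠ t) : dec c t s = c s := if_neg h

lemma gap_mono {w : ℕ → ℤ} (hw : ∀ i, 1 ≤ i → i + 1 ≤ n → w i < w (i + 1))
    {i t : ℕ} (h1 : 1 ≤ i) (hit : i ≤ t) (htn : t ≤ n) :
    w i + ((t : ℤ) - (i : ℤ)) ≤ w t := by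
  induction t, hit using Nat.le_induction with
  | base => simp
  | succ t hit ih =>
    have h2 := hw t (le_trans h1 hit) (by omega)
    have h3 := ih (by omega)
    push_cast at h3 ⊢
    omega

lemma utuple_mem (humono : ∀ i, 1 ≤ i → i + 1 ≤ n → u i < u (i + 1))
    (huv : ∀ i, 1 ≤ i → i ≤ n → u i < v i) :
    utuple u n ∈ ladderL n u v := by
  refine ⟨fun t h1 h2 => ?_, fun t h1 h2 => ?_, fun t h => ?_⟩
  · rw [utuple_in h1 h2]; exact ⟨le_refl _, le_of_lt (huv t h1 h2)⟩
  · rw [utuple_in h1 (by omega), utuple_in (by omega) h2]; exact humono t h1 h2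
  · exact utuple_out (by omega)

lemma atuple_mem (humono : ∀ i, 1 ≤ i → i + 1 ≤ n → u i < u (i + 1))
    (hvmono : ∀ i, 1 ≤ i → i + 1 ≤ n → v i < v (i + 1))
    (huv : ∀ i, 1 ≤ i → i ≤ n → u i < v i)
    {i : ℕ} {j : ℤ} (hi1 : 1 ≤ i) (hin : i ≤ n) (hj1 : u i + 1 ≤ j) (hj2 : j ≤ v i) :
    atuple u n i j ∈ ladderL n u v := by
  refine ⟨fun t h1 h2 => ?_, fun t h1 h2 => ?_, fun t h => ?_⟩
  · by_cases hti : t < i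
    · rw [atuple_lo h1 h2 hti]; exact ⟨le_refl _, le_of_lt (huv t h1 h2)⟩
    · rw [atuple_hi h1 h2 (by omega)]
      refine ⟨le_max_right _ _, max_le ?_ (le_of_lt (huv t h1 h2))⟩
      have := gap_mono hvmono hi1 (by omega : i ≤ t) h2
      omega
  · by_cases h3 : t + 1 < i
    · rw [atuple_lo h1 (by omega) (by omega), atuple_lo (by omega) h2 h3]
      exact humono t h1 h2
    · rw [atuple_hi (by omega) h2 (by omega)]
      by_cases h4 : t < i
      · rw [atuple_lo h1 (by omega) h4]
        have h5 : u t < u (t + 1) := humono t h1 h2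
        exact lt_of_lt_of_le h5 (le_max_right _ _)
      · rw [atuple_hi h1 (by omega) (by omega)]
        have h5 := humono t h1 h2
        have h6 : j + ((t:ℤ) - i) < j + ((((t+1 : ℕ)):ℤ) - i) := by push_cast; omega
        exact max_lt_max h6 h5
  · exact atuple_out (by omega)

end

section
variable {n : ℕ} {u v : ℕ → ℤ}

/-- If no coordinate is decreasable, `c` is the bottom tuple. -/
lemma noD_eq_utuple (humono : ∀ i, 1 ≤ i → i + 1 ≤ n → u i < u (i + 1))
    {c : ℕ → ℤ} (hc : c ∈ ladderL n u v)
    (h : ∀ t, 1 ≤ t → t ≤ n → ¬ inD u c t) : c = utuple u n := by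
  obtain ⟨hb, hmono, hout⟩ := hc
  have key : ∀ t, 1 ≤ t → t ≤ n → c t = u t := by
    intro t h1
    induction t, h1 using Nat.le_induction with
    | base =>
      intro h1n
      have h2 := h 1 le_rfl h1n
      simp only [inD, not_and_or] at h2
      have h3 := (hb 1 le_rfl h1n).1
      rcases h2 with h2 | h2
      · omega
      · exfalso; exact h2 (fun s hs h1s => by omega)
    | succ t ht ih =>
      intro htn
      have ihv := ih (by omega)
      have h2 := h (t + 1) (by omega) htn
      simp only [inD, not_and_or] at h2
      have h3 := (hb (t + 1) (by omega) htn).1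
      have h4 := hmono t ht (by omega)
      have h5 := humono t ht (by omega)
      rcases h2 with h2 | h2
      · omega
      · push_neg at h2
        obtain ⟨s, hs, h1s, hlt⟩ := h2
        have hst : s = t := by omega
        subst hst
        omega
  funext t
  by_cases ht : 1 ≤ t ∧ t ≤ n
  · rw [utuple_in ht.1 ht.2, key t ht.1 ht.2]
  · rw [utuple_out ht, hout t (by omega)]

/-- If exactly one coordinate `i` is decreasable, `c = atuple u n i (c i)`. -/
lemma oneD_eq_atuple (humono : ∀ i, 1 ≤ i → i + 1 ≤ n → u i < u (i + 1))
    {c : ℕ → ℤ} (hc : c ∈ ladderL n u v) {i : ℕ} (hi1 : 1 ≤ i) (hin : i ≤ n)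
    (hDi : inD u c i)
    (h : ∀ t, 1 ≤ t → t ≤ n → t ≠ i → ¬ inD u c t) : c = atuple u n i (c i) := by
  obtain ⟨hb, hmono, hout⟩ := hc
  -- below i
  have keylo : ∀ t, 1 ≤ t → t < i → c t = u t := by
    intro t h1
    induction t, h1 using Nat.le_induction with
    | base =>
      intro h1i
      have h2 := h 1 le_rfl (by omega) (by omega)
      simp only [inD, not_and_or] at h2
      have h3 := (hb 1 le_rfl (by omega)).1
      rcases h2 with h2 | h2
      · omega
      · exfalso; exact h2 (fun s hs h1s => by omega)
    | succ t ht ih =>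
      intro hti
      have ihv := ih (by omega)
      have h2 := h (t + 1) (by omega) (by omega) (by omega)
      simp only [inD, not_and_or] at h2
      have h3 := (hb (t + 1) (by omega) (by omega)).1
      have h4 := hmono t ht (by omega)
      have h5 := humono t ht (by omega)
      rcases h2 with h2 | h2
      · omega
      · push_neg at h2
        obtain ⟨s, hs, h1s, hlt⟩ := h2
        have hst : s = t := by omega
        subst hst
        omega
  -- at and above i
  have keyhi : ∀ t, i ≤ t → t ≤ n → c t = max (c i + ((t : ℤ) - (i : ℤ))) (u t) := by
    intro t hit
    induction t, hit using Nat.le_induction with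
    | base =>
      intro _
      have h3 := (hb i hi1 hin).1
      simp only [sub_self, add_zero]
      omega
    | succ t hit ih =>
      intro htn
      have ihv := ih (by omega)
      have h1t : 1 ≤ t := by omega
      have h2 := h (t + 1) (by omega) htn (by omega)
      simp only [inD, not_and_or] at h2
      have h3 := (hb (t + 1) (by omega) htn).1
      have h4 := hmono t h1t (by omega)
      have h5 := humono t h1t (by omega)
      have hmx : c t = max (c i + ((t : ℤ) - (i : ℤ))) (u t) := ihv
      have hmax1 : c i + ((t : ℤ) - (i : ℤ)) ≤ c t := by rw [hmx]; exact le_max_left _ _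
      have hcast : (((t + 1 : ℕ)) : ℤ) = (t : ℤ) + 1 := by push_cast; ring
      rcases h2 with h2 | h2
      · -- c (t+1) ≤ u (t+1), so equality with u (t+1); max must equal u (t+1)
        push_neg at h2
        have he : c (t + 1) = u (t + 1) := le_antisymm h2 h3
        rw [he, hcast]
        have : c i + ((t : ℤ) + 1 - (i : ℤ)) ≤ u (t + 1) := by omega
        omega
      · push_neg at h2
        obtain ⟨s, hs, h1s, hlt⟩ := h2
        have hst : s = t := by omega
        rw [hst] at hlt
        -- c (t+1) = c t + 1
        have he : c (t + 1) = c t + 1 := by omega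
        rw [he, hmx, hcast]
        omega
  funext t
  by_cases ht : 1 ≤ t ∧ t ≤ n
  · by_cases hti : t < i
    · rw [atuple_lo ht.1 ht.2 hti]; exact keylo t ht.1 hti
    · rw [atuple_hi ht.1 ht.2 (by omega)]; exact keyhi t (by omega) ht.2
  · rw [atuple_out ht, hout t (by omega)]

end

section
variable {n : ℕ} {u v : ℕ → ℤ}

lemma inD_atuple (humono : ∀ i, 1 ≤ i → i + 1 ≤ n → u i < u (i + 1))
    {i : ℕ} {j : ℤ} (hi1 : 1 ≤ i) (hin : i ≤ n) (hj1 : u i + 1 ≤ j) :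
    inD u (atuple u n i j) i := by
  have hai : atuple u n i j i = j := by
    rw [atuple_hi hi1 hin le_rfl]
    simp only [sub_self, add_zero]
    omega
  constructor
  · rw [hai]; omega
  · intro s hs h1s
    have hsi : s < i := by omega
    rw [atuple_lo h1s (by omega) hsi, hai]
    have h5 := humono s h1s (by omega)
    rw [hs] at h5
    omega

lemma not_inD_atuple {i : ℕ} {j : ℤ} (hi1 : 1 ≤ i) (hj1 : u i + 1 ≤ j)
    {t : ℕ} (h1 : 1 ≤ t) (h2 : t ≤ n) (hti : t ≠ i) :
    ¬ inD u (atuple u n i j) t := by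
  intro hD
  by_cases hlt : t < i
  · rw [inD, atuple_lo h1 h2 hlt] at hD
    omega
  · -- t > i
    have hit : i < t := by omega
    have hval := atuple_hi (u := u) (n := n) (i := i) (j := j) h1 h2 (by omega : i ≤ t)
    have hgt : u t < atuple u n i j t := hD.1
    have hvj : atuple u n i j t = j + ((t : ℤ) - (i : ℤ)) := by
      rw [hval] at hgt ⊢
      rcases max_choice (j + ((t : ℤ) - (i : ℤ))) (u t) with h | h
      · exact h
      · rw [h] at hgt; omega
    obtain ⟨s, hst⟩ : ∃ s, s + 1 = t := ⟨t - 1, by omega⟩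
    have h1s : 1 ≤ s := by omega
    have h2' := hD.2 s hst h1s
    have hsv : atuple u n i j s ≥ j + ((s : ℤ) - (i : ℤ)) := by
      rw [atuple_hi h1s (by omega) (by omega : i ≤ s)]
      exact le_max_left _ _
    have hcast : (t : ℤ) = (s : ℤ) + 1 := by exact_mod_cast congrArg (Nat.cast : ℕ → ℤ) hst.symm
    rw [hvj, hcast] at h2'
    omega

lemma not_inD_utuple {t : ℕ} (h1 : 1 ≤ t) (h2 : t ≤ n) : ¬ inD u (utuple u n) t := by
  intro hD
  have := hD.1
  rw [utuple_in h1 h2] at this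
  omega

lemma dec_mem {c : ℕ → ℤ} (hc : c ∈ ladderL n u v) {t : ℕ} (h1 : 1 ≤ t) (h2 : t ≤ n)
    (hD : inD u c t) : dec c t ∈ ladderL n u v := by
  obtain ⟨hb, hmono, hout⟩ := hc
  refine ⟨fun s hs1 hs2 => ?_, fun s hs1 hs2 => ?_, fun s hs => ?_⟩
  · by_cases hst : s = t
    · subst hst
      rw [dec_self]
      have := (hb s hs1 hs2).2
      have := hD.1
      omega
    · rw [dec_other c hst]; exact hb s hs1 hs2
  · by_cases hst : s = t
    · subst hst
      rw [dec_self, dec_other c (by omega : s + 1 ≠ s)]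
      have := hmono s hs1 hs2
      omega
    · rw [dec_other c hst]
      by_cases hst2 : s + 1 = t
      · rw [hst2, dec_self]
        have := hD.2 s hst2 hs1
        omega
      · rw [dec_other c hst2]; exact hmono s hs1 hs2
  · have hso : s ≠ t := by omega
    rw [dec_other c hso]; exact hout s hs

lemma dec_le {c : ℕ → ℤ} (t : ℕ) : dec c t ≤ c := by
  simp only [Pi.le_def]
  intro s
  by_cases hst : s = t
  · rw [hst, dec_self]; omega
  · rw [dec_other c hst]

lemma dec_ne {c : ℕ → ℤ} (t : ℕ) : dec c t ≠ c := by
  intro h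
  have := congrFun h t
  rw [dec_self] at this
  omega

lemma dec_lt {c : ℕ → ℤ} (t : ℕ) : dec c t < c :=
  lt_of_le_of_ne (dec_le t) (dec_ne t)

lemma interp {c d : ℕ → ℤ} (hc : c ∈ ladderL n u v) (hd : d ∈ ladderL n u v)
    (hle : d ≤ c) (hne : d ≠ c) :
    ∃ t, 1 ≤ t ∧ t ≤ n ∧ inD u c t ∧ d ≤ dec c t := by
  have hex : ∃ t, d t < c t := by
    by_contra hcon
    push_neg at hcon
    exact hne (funext fun t => le_antisymm (hle t) (hcon t))
  classical
  obtain ⟨t, htlt, hmin⟩ := Nat.findX hex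
  obtain ⟨hbc, hmc, hoc⟩ := hc
  obtain ⟨hbd, hmd, hod⟩ := hd
  have ht1 : 1 ≤ t := by
    rcases Nat.eq_zero_or_pos t with h | h
    · exfalso; rw [hoc t (Or.inl h), hod t (Or.inl h)] at htlt; omega
    · exact h
  have htn : t ≤ n := by
    by_contra hcon
    rw [hoc t (Or.inr (by omega)), hod t (Or.inr (by omega))] at htlt; omega
  have hprev : ∀ s, s < t → d s = c s := fun s hs =>
    le_antisymm (hle s) (not_lt.mp (hmin s hs))
  simp only [Pi.le_def] at hle ⊢
  refine ⟨t, ht1, htn, ⟨?_, ?_⟩, ?_⟩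
  · exact lt_of_le_of_lt ((hbd t ht1 htn).1) htlt
  · intro s hs h1s
    have hds : d s = c s := hprev s (by omega)
    have := hmd s h1s (by omega)
    rw [hs] at this
    have h2 : d t ≤ c t - 1 := by omega
    omega
  · intro s
    by_cases hst : s = t
    · rw [hst, dec_self]; omega
    · rw [dec_other c hst]; exact hle s
end


section
variable {n : ℕ} {u v : ℕ → ℤ} {r : ℤ}

lemma val_le_val {x y : ↥(ladderLr n u v r)} (h : x ≤ y) : x.val ≤ y.val := h

lemma lt_of_val_lt {x y : ↥(ladderLr n u v r)} (h : x.val < y.val) : x < y :=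
  Subtype.coe_lt_coe.mp h

lemma val_lt_val {x y : ↥(ladderLr n u v r)} (h : x < y) : x.val < y.val :=
  Subtype.coe_lt_coe.mpr h

lemma le_of_val_le {x y : ↥(ladderLr n u v r)} (h : x.val ≤ y.val) : x ≤ y := h

lemma cover_char (x y : ↥(ladderLr n u v r)) :
    y ⋖ x ↔
      ((2 ≤ x.val.2 ∧ y.val = (x.val.1, x.val.2 - 1)) ∨
       (∃ t, 1 ≤ t ∧ t ≤ n ∧ inD u x.val.1 t ∧ y.val = (dec x.val.1 t, x.val.2))) := by
  obtain ⟨hxL, hx1, hxr⟩ := x.prop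
  constructor
  · intro hcov
    have hlt : y.val < x.val := val_lt_val hcov.1
    have hle : y.val ≤ x.val := hlt.le
    have hle1 : y.val.1 ≤ x.val.1 := hle.1
    have hle2 : y.val.2 ≤ x.val.2 := hle.2
    by_cases h1 : y.val.1 = x.val.1
    · left
      have h2 : y.val.2 < x.val.2 := by
        rcases lt_or_eq_of_le hle2 with h | h
        · exact h
        · exact absurd (Prod.ext h1 h) hlt.ne
      have hy1 : 1 ≤ y.val.2 := y.prop.2.1
      have h2r : 2 ≤ x.val.2 := by omega
      refine ⟨h2r, ?_⟩
      have hzmem : ((x.val.1, x.val.2 - 1) : (ℕ → ℤ) × ℤ) ∈ ladderLr n u v r :=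
        ⟨hxL, by omega, by omega⟩
      have hzx : (⟨(x.val.1, x.val.2 - 1), hzmem⟩ : ↥(ladderLr n u v r)) < x := by
        apply lt_of_val_lt
        apply lt_of_le_of_ne
          (show ((x.val.1, x.val.2 - 1) : (ℕ → ℤ) × ℤ) ≤ x.val from
            Prod.le_def.mpr ⟨le_refl _, sub_le_self _ zero_le_one⟩)
        intro h
        have := congrArg Prod.snd h
        simp only at this
        omega
      have hyz : y ≤ ⟨(x.val.1, x.val.2 - 1), hzmem⟩ :=
        le_of_val_le (Prod.le_def.mpr ⟨le_of_eq h1, by show y.val.2 ≤ x.val.2 - 1; omega⟩)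
      have hyz2 : ¬ y < ⟨(x.val.1, x.val.2 - 1), hzmem⟩ := fun h => hcov.2 h hzx
      have heq : y = ⟨(x.val.1, x.val.2 - 1), hzmem⟩ :=
        (lt_or_eq_of_le hyz).resolve_left hyz2
      rw [heq]
    · right
      obtain ⟨t, ht1, htn, htD, hdle⟩ := interp hxL y.prop.1 hle1 h1
      refine ⟨t, ht1, htn, htD, ?_⟩
      have hzmem : ((dec x.val.1 t, x.val.2) : (ℕ → ℤ) × ℤ) ∈ ladderLr n u v r :=
        ⟨dec_mem hxL ht1 htn htD, hx1, hxr⟩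
      have hzx : (⟨(dec x.val.1 t, x.val.2), hzmem⟩ : ↥(ladderLr n u v r)) < x := by
        apply lt_of_val_lt
        apply lt_of_le_of_ne
          (show ((dec x.val.1 t, x.val.2) : (ℕ → ℤ) × ℤ) ≤ x.val from
            Prod.le_def.mpr ⟨dec_le t, le_refl _⟩)
        intro h
        exact dec_ne t (congrArg Prod.fst h)
      have hyz : y ≤ ⟨(dec x.val.1 t, x.val.2), hzmem⟩ :=
        le_of_val_le (Prod.le_def.mpr ⟨hdle, hle2⟩)
      have hyz2 : ¬ y < ⟨(dec x.val.1 t, x.val.2), hzmem⟩ := fun h => hcov.2 h hzx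
      have heq : y = ⟨(dec x.val.1 t, x.val.2), hzmem⟩ :=
        (lt_or_eq_of_le hyz).resolve_left hyz2
      rw [heq]
  · intro h
    rcases h with ⟨h2, hyval⟩ | ⟨t, ht1, htn, htD, hyval⟩
    · constructor
      · apply lt_of_val_lt
        rw [hyval]
        apply lt_of_le_of_ne
          (show ((x.val.1, x.val.2 - 1) : (ℕ → ℤ) × ℤ) ≤ x.val from
            Prod.le_def.mpr ⟨le_refl _, sub_le_self _ zero_le_one⟩)
        intro h
        have := congrArg Prod.snd h
        simp only at this
        omega
      · intro z hyz hzx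
        have hyzv := val_lt_val hyz
        have hzxv := val_lt_val hzx
        rw [hyval] at hyzv
        have hz1 : z.val.1 = x.val.1 := le_antisymm hzxv.le.1 hyzv.le.1
        have hz2a : x.val.2 - 1 ≤ z.val.2 := hyzv.le.2
        have hz2b : z.val.2 ≤ x.val.2 := hzxv.le.2
        have h21 : z.val.2 ≠ x.val.2 - 1 := fun h => hyzv.ne' (Prod.ext hz1 h)
        have h22 : z.val.2 ≠ x.val.2 := fun h => hzxv.ne (Prod.ext hz1 h)
        omega
    · constructor
      · apply lt_of_val_lt
        rw [hyval]
        apply lt_of_le_of_ne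
          (show ((dec x.val.1 t, x.val.2) : (ℕ → ℤ) × ℤ) ≤ x.val from
            Prod.le_def.mpr ⟨dec_le t, le_refl _⟩)
        intro h
        exact dec_ne t (congrArg Prod.fst h)
      · intro z hyz hzx
        have hyzv := val_lt_val hyz
        have hzxv := val_lt_val hzx
        rw [hyval] at hyzv
        have hle1 : ∀ s, z.val.1 s ≤ x.val.1 s := fun s => hzxv.le.1 s
        have hge1 : ∀ s, dec x.val.1 t s ≤ z.val.1 s := fun s => hyzv.le.1 s
        have hz2a : x.val.2 ≤ z.val.2 := hyzv.le.2
        have hz2b : z.val.2 ≤ x.val.2 := hzxv.le.2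
        by_cases hzt : z.val.1 t = x.val.1 t
        · have hz1 : z.val.1 = x.val.1 := by
            funext s
            by_cases hst : s = t
            · rw [hst]; exact hzt
            · have := hge1 s; rw [dec_other _ hst] at this
              exact le_antisymm (hle1 s) this
          exact hzxv.ne (Prod.ext hz1 (by omega))
        · have hzt2 : z.val.1 t = x.val.1 t - 1 := by
            have ha := hge1 t; rw [dec_self] at ha
            have hb := hle1 t
            omega
          have hz1 : z.val.1 = dec x.val.1 t := by
            funext s
            by_cases hst : s = t
            · rw [hst, dec_self]; exact hzt2
            · have := hge1 s; rw [dec_other _ hst] at this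
              rw [dec_other _ hst]
              exact le_antisymm (hle1 s) this
          exact hyzv.ne' (Prod.ext hz1 (by omega))

end



theorem stmt4
    (n m : ℕ) (u v : ℕ → ℤ)
    (hn : 1 ≤ n) (hnm : n < m)
    (hu1 : u 1 = 1)
    (humono : ∀ i, 1 ≤ i → i + 1 ≤ n → u i < u (i + 1))
    (hum : u n < (m : ℤ))
    (hv1 : 1 < v 1)
    (hvmono : ∀ i, 1 ≤ i → i + 1 ≤ n → v i < v (i + 1))
    (hvn : v n = (m : ℤ))
    (huv : ∀ i, 1 ≤ i → i ≤ n → u i < v i)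
    (hstep : ∀ i, 1 ≤ i → i + 1 ≤ n → u (i + 1) ≤ v i + 1)
    (r : ℤ) (hr : 1 ≤ r) :
    ∀ x : ↥(ladderLr n u v r),
      (∃! y : ↥(ladderLr n u v r), y ⋖ x) ↔ (x : (ℕ → ℤ) × ℤ) ∈ PLr n u v r := by
  intro x
  obtain ⟨hxL, hx1, hxr⟩ := x.prop
  constructor
  · rintro ⟨y, hy, huniq⟩
    rw [cover_char] at hy
    rcases hy with ⟨h2k, hyval⟩ | ⟨t, ht1, htn, htD, hyval⟩
    · -- second coordinate drops; no coordinate of x.val.1 may be decreasable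
      have hnoD : ∀ t, 1 ≤ t → t ≤ n → ¬ inD u x.val.1 t := by
        intro t h1 h2 hD
        have hzmem : ((dec x.val.1 t, x.val.2) : (ℕ → ℤ) × ℤ) ∈ ladderLr n u v r :=
          ⟨dec_mem hxL h1 h2 hD, hx1, hxr⟩
        have hz : (⟨(dec x.val.1 t, x.val.2), hzmem⟩ : ↥(ladderLr n u v r)) ⋖ x :=
          (cover_char x _).mpr (Or.inr ⟨t, h1, h2, hD, rfl⟩)
        have hzy := huniq _ hz
        have : ((dec x.val.1 t, x.val.2) : (ℕ → ℤ) × ℤ) = y.val := by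
          rw [← hzy]
        rw [hyval] at this
        have h2nd := congrArg Prod.snd this
        simp only at h2nd
        omega
      have hcu := noD_eq_utuple humono hxL hnoD
      exact Or.inr ⟨hcu, h2k, hxr⟩
    · -- a coordinate drops; second coordinate must be 1
      have hk1 : x.val.2 = 1 := by
        by_contra hk
        have h2k : 2 ≤ x.val.2 := by omega
        have hzmem : ((x.val.1, x.val.2 - 1) : (ℕ → ℤ) × ℤ) ∈ ladderLr n u v r :=
          ⟨hxL, by omega, by omega⟩
        have hz : (⟨(x.val.1, x.val.2 - 1), hzmem⟩ : ↥(ladderLr n u v r)) ⋖ x :=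
          (cover_char x _).mpr (Or.inl ⟨h2k, rfl⟩)
        have hzy := huniq _ hz
        have : ((x.val.1, x.val.2 - 1) : (ℕ → ℤ) × ℤ) = y.val := by rw [← hzy]
        rw [hyval] at this
        have h1st := congrArg Prod.fst this
        simp only at h1st
        have := congrFun h1st t
        rw [dec_self] at this
        omega
      have honly : ∀ t', 1 ≤ t' → t' ≤ n → t' ≠ t → ¬ inD u x.val.1 t' := by
        intro t' h1 h2 hne hD
        have hzmem : ((dec x.val.1 t', x.val.2) : (ℕ → ℤ) × ℤ) ∈ ladderLr n u v r :=
          ⟨dec_mem hxL h1 h2 hD, hx1, hxr⟩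
        have hz : (⟨(dec x.val.1 t', x.val.2), hzmem⟩ : ↥(ladderLr n u v r)) ⋖ x :=
          (cover_char x _).mpr (Or.inr ⟨t', h1, h2, hD, rfl⟩)
        have hzy := huniq _ hz
        have : ((dec x.val.1 t', x.val.2) : (ℕ → ℤ) × ℤ) = y.val := by rw [← hzy]
        rw [hyval] at this
        have h1st := congrArg Prod.fst this
        simp only at h1st
        have := congrFun h1st t'
        rw [dec_self, dec_other _ hne] at this
        omega
      have hca := oneD_eq_atuple humono hxL ht1 htn htD honly
      refine Or.inl ⟨⟨t, x.val.1 t, ht1, htn, ?_, ?_, hca⟩, hk1⟩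
      · have := htD.1; omega
      · exact (hxL.1 t ht1 htn).2
  · intro hP
    rcases hP with ⟨⟨i, j, hi1, hin, hj1, hj2, hval1⟩, hk1⟩ | ⟨hval1, h2k, hkr⟩
    · -- x = (atuple, 1)
      have hDi : inD u x.val.1 i := by rw [hval1]; exact inD_atuple humono hi1 hin hj1
      have hzmem : ((dec x.val.1 i, x.val.2) : (ℕ → ℤ) × ℤ) ∈ ladderLr n u v r :=
        ⟨dec_mem hxL hi1 hin hDi, hx1, hxr⟩
      refine ⟨⟨(dec x.val.1 i, x.val.2), hzmem⟩, (cover_char x _).mpr (Or.inr ⟨i, hi1, hin, hDi, rfl⟩), ?_⟩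
      intro z hz
      rw [cover_char] at hz
      rcases hz with ⟨h2z, hzval⟩ | ⟨t, ht1, htn, htD, hzval⟩
      · omega
      · have hti : t = i := by
          by_contra hne
          rw [hval1] at htD
          exact not_inD_atuple hi1 hj1 ht1 htn hne htD
        apply Subtype.ext
        rw [hzval, hti]
    · -- x = (utuple, k), k ≥ 2
      have hzmem : ((x.val.1, x.val.2 - 1) : (ℕ → ℤ) × ℤ) ∈ ladderLr n u v r :=
        ⟨hxL, by omega, by omega⟩
      refine ⟨⟨(x.val.1, x.val.2 - 1), hzmem⟩, (cover_char x _).mpr (Or.inl ⟨h2k, rfl⟩), ?_⟩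
      intro z hz
      rw [cover_char] at hz
      rcases hz with ⟨h2z, hzval⟩ | ⟨t, ht1, htn, htD, hzval⟩
      · exact Subtype.ext hzval
      · exfalso
        rw [hval1] at htD
        exact not_inD_utuple ht1 htn htD


end LadderPaper
end

section
/- Let a_{k,l}, a_{i,j} ∈ P_𝓛 with a_{k,l} < a_{i,j}. Then every saturated chain in the subposet P_𝓛 whose least element is a_{k,l} and whose greatest element is a_{i,j} has length 2(k − i) + (j − l). -/
namespace LadderPaper

lemma step_sum (w : ℕ → ℤ) (n : ℕ)
    (hw : ∀ a, 1 ≤ a → a + 1 ≤ n → w a < w (a + 1)) :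
    ∀ b a : ℕ, 1 ≤ a → a ≤ b → b ≤ n → w a + ((b : ℤ) - (a : ℤ)) ≤ w b := by
  intro b
  induction b with
  | zero => intro a ha hab hbn; omega
  | succ b ih =>
    intro a ha hab hbn
    rcases Nat.lt_or_ge b a with h | h
    · have : a = b + 1 := by omega
      subst this; push_cast; linarith
    · have h1 := ih a ha h (by omega)
      have h2 := hw b (by omega) (by omega)
      push_cast at *; linarith

lemma atuple_le_iff (n : ℕ) (u : ℕ → ℤ) (i k : ℕ) (j l : ℤ)
    (hi1 : 1 ≤ i) (hin : i ≤ n) (hj1 : u i + 1 ≤ j)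
    (hk1 : 1 ≤ k) (hkn : k ≤ n) (hl1 : u k + 1 ≤ l) :
    atuple u n k l ≤ atuple u n i j ↔ i ≤ k ∧ l + (i : ℤ) ≤ j + (k : ℤ) := by
  constructor
  · intro h
    have hk := h k
    simp only [atuple, if_pos (show 1 ≤ k ∧ k ≤ n from ⟨hk1, hkn⟩), lt_self_iff_false,
      if_false, sub_self, add_zero] at hk
    rw [max_eq_left (by linarith)] at hk
    have hik : i ≤ k := by
      by_contra hcon
      rw [if_pos (by omega)] at hk
      linarith
    rw [if_neg (by omega)] at hk
    refine ⟨hik, ?_⟩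
    rcases le_max_iff.mp hk with h' | h'
    · omega
    · linarith
  · rintro ⟨hik, hsum⟩ t
    simp only [atuple]
    by_cases ht : 1 ≤ t ∧ t ≤ n
    · rw [if_pos ht, if_pos ht]
      by_cases hti : t < i
      · rw [if_pos hti, if_pos (by omega)]
      · rw [if_neg hti]
        by_cases htk : t < k
        · rw [if_pos htk]
          exact le_max_right _ _
        · rw [if_neg htk]
          exact max_le_max (by omega) le_rfl
    · rw [if_neg ht, if_neg ht]

lemma atuple_inj (n : ℕ) (u : ℕ → ℤ) (i k : ℕ) (j l : ℤ)
    (hi1 : 1 ≤ i) (hin : i ≤ n) (hj1 : u i + 1 ≤ j)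
    (hk1 : 1 ≤ k) (hkn : k ≤ n) (hl1 : u k + 1 ≤ l)
    (h : atuple u n k l = atuple u n i j) : i = k ∧ j = l := by
  have e1 := (atuple_le_iff n u i k j l hi1 hin hj1 hk1 hkn hl1).mp h.le
  have e2 := (atuple_le_iff n u k i l j hk1 hkn hl1 hi1 hin hj1).mp h.ge
  exact ⟨by omega, by omega⟩

lemma atuple_lt_iff (n : ℕ) (u : ℕ → ℤ) (i k : ℕ) (j l : ℤ)
    (hi1 : 1 ≤ i) (hin : i ≤ n) (hj1 : u i + 1 ≤ j)
    (hk1 : 1 ≤ k) (hkn : k ≤ n) (hl1 : u k + 1 ≤ l) :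
    atuple u n k l < atuple u n i j ↔
      i ≤ k ∧ l + (i : ℤ) ≤ j + (k : ℤ) ∧ ¬(i = k ∧ j = l) := by
  rw [lt_iff_le_and_ne, atuple_le_iff n u i k j l hi1 hin hj1 hk1 hkn hl1]
  constructor
  · rintro ⟨⟨h1, h2⟩, hne⟩
    refine ⟨h1, h2, ?_⟩
    rintro ⟨rfl, rfl⟩
    exact hne rfl
  · rintro ⟨h1, h2, hne⟩
    refine ⟨⟨h1, h2⟩, fun he => ?_⟩
    obtain ⟨e1, e2⟩ := atuple_inj n u i k j l hi1 hin hj1 hk1 hkn hl1 he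
    exact hne ⟨e1, e2⟩

lemma cover_classify
    (n : ℕ) (u v : ℕ → ℤ)
    (humono : ∀ a, 1 ≤ a → a + 1 ≤ n → u a < u (a + 1))
    (hvmono : ∀ a, 1 ≤ a → a + 1 ≤ n → v a < v (a + 1))
    (i k : ℕ) (j l : ℤ)
    (hi1 : 1 ≤ i) (hin : i ≤ n) (hj1 : u i + 1 ≤ j) (hj2 : j ≤ v i)
    (hk1 : 1 ≤ k) (hkn : k ≤ n) (hl1 : u k + 1 ≤ l) (hl2 : l ≤ v k)
    (hlt : atuple u n k l < atuple u n i j)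
    (hmid : ∀ i' : ℕ, ∀ j' : ℤ, 1 ≤ i' → i' ≤ n → u i' + 1 ≤ j' → j' ≤ v i' →
      atuple u n k l < atuple u n i' j' → atuple u n i' j' < atuple u n i j → False) :
    j - 2 * (i : ℤ) = l - 2 * (k : ℤ) + 1 := by
  obtain ⟨hik, hsum, hne⟩ :=
    (atuple_lt_iff n u i k j l hi1 hin hj1 hk1 hkn hl1).mp hlt
  rcases eq_or_lt_of_le hik with heq | hlt'
  · -- i = k
    subst heq
    have hlj : l < j := by
      rcases lt_or_eq_of_le (show l ≤ j by omega) with h | h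
      · exact h
      · exact absurd ⟨rfl, h.symm⟩ hne
    by_cases hj : j = l + 1
    · omega
    · exfalso
      refine hmid i (l + 1) hi1 hin (by omega) (by linarith) ?_ ?_
      · exact (atuple_lt_iff n u i i (l + 1) l hi1 hin (by omega) hi1 hin hl1).mpr
          ⟨le_rfl, by omega, by omega⟩
      · exact (atuple_lt_iff n u i i j (l + 1) hi1 hin hj1 hi1 hin (by omega)).mpr
          ⟨le_rfl, by omega, by omega⟩
  · -- i < k
    by_cases hcase : k = i + 1 ∧ j = l - 1
    · obtain ⟨hk', hj'⟩ := hcase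
      subst hk' hj'
      push_cast
      ring
    · exfalso
      have hu' : u (k - 1) + 1 ≤ l - 1 := by
        have h := humono (k - 1) (by omega) (by omega)
        rw [show k - 1 + 1 = k by omega] at h
        omega
      have hv' : l - 1 ≤ v (k - 1) := by
        by_contra hcon
        have hvv := step_sum v n hvmono (k - 1) i hi1 (by omega) (by omega)
        omega
      refine hmid (k - 1) (l - 1) (by omega) (by omega) hu' hv' ?_ ?_
      · exact (atuple_lt_iff n u (k - 1) k (l - 1) l (by omega) (by omega) hu' hk1 hkn hl1).mpr
          ⟨by omega, by omega, by omega⟩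
      · exact (atuple_lt_iff n u i (k - 1) j (l - 1) hi1 hin hj1 (by omega) (by omega) hu').mpr
          ⟨by omega, by omega, by omega⟩

theorem stmt9
    (n m : ℕ) (u v : ℕ → ℤ)
    (hn : 1 ≤ n) (hnm : n < m)
    (hu1 : u 1 = 1)
    (humono : ∀ i, 1 ≤ i → i + 1 ≤ n → u i < u (i + 1))
    (hum : u n < (m : ℤ))
    (hv1 : 1 < v 1)
    (hvmono : ∀ i, 1 ≤ i → i + 1 ≤ n → v i < v (i + 1))
    (hvn : v n = (m : ℤ))
    (huv : ∀ i, 1 ≤ i → i ≤ n → u i < v i)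
    (hstep : ∀ i, 1 ≤ i → i + 1 ≤ n → u (i + 1) ≤ v i + 1)
    (i k : ℕ) (j l : ℤ)
    (hi1 : 1 ≤ i) (hin : i ≤ n) (hj1 : u i + 1 ≤ j) (hj2 : j ≤ v i)
    (hk1 : 1 ≤ k) (hkn : k ≤ n) (hl1 : u k + 1 ≤ l) (hl2 : l ≤ v k)
    (hlt : atuple u n k l < atuple u n i j) :
    ∀ (N : ℕ) (f : Fin (N + 1) → ↥(PL n u v)),
      (∀ s : Fin N, f s.castSucc ⋖ f s.succ) →
      ((f 0 : ℕ → ℤ) = atuple u n k l) →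
      ((f (Fin.last N) : ℕ → ℤ) = atuple u n i j) →
      (N : ℤ) = 2 * ((k : ℤ) - (i : ℤ)) + (j - l) := by
  intro N f hcov h0 hlast
  have key : ∀ s : ℕ, ∀ _hs : s ≤ N, ∃ i' : ℕ, ∃ j' : ℤ,
      1 ≤ i' ∧ i' ≤ n ∧ u i' + 1 ≤ j' ∧ j' ≤ v i' ∧
      ((f ⟨s, by omega⟩ : ℕ → ℤ) = atuple u n i' j') ∧
      j' - 2 * (i' : ℤ) = l - 2 * (k : ℤ) + (s : ℤ) := by
    intro s
    induction s with
    | zero =>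
      intro _
      have h00 : (⟨0, by omega⟩ : Fin (N + 1)) = 0 := rfl
      rw [h00]
      exact ⟨k, l, hk1, hkn, hl1, hl2, h0, by simp⟩
    | succ s ih =>
      intro hs
      obtain ⟨i1, j1, hi1', hin1, hj11, hj12, hf1, hrk⟩ := ih (by omega)
      obtain ⟨i2, j2, hi2', hin2, hj21, hj22, hf2⟩ := (f ⟨s + 1, by omega⟩).2
      have hc : f ⟨s, by omega⟩ ⋖ f ⟨s + 1, by omega⟩ := hcov ⟨s, by omega⟩
      have hltt : atuple u n i1 j1 < atuple u n i2 j2 := by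
        have h' := hc.1
        rw [← Subtype.coe_lt_coe] at h'
        rwa [hf1, hf2] at h'
      have hmid : ∀ i' : ℕ, ∀ j' : ℤ, 1 ≤ i' → i' ≤ n → u i' + 1 ≤ j' → j' ≤ v i' →
          atuple u n i1 j1 < atuple u n i' j' → atuple u n i' j' < atuple u n i2 j2 →
          False := by
        intro i' j' h1 h2 h3 h4 hA hB
        have hzmem : atuple u n i' j' ∈ PL n u v := ⟨i', j', h1, h2, h3, h4, rfl⟩
        have hA' : f ⟨s, by omega⟩ < (⟨atuple u n i' j', hzmem⟩ : ↥(PL n u v)) := by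
          rw [← Subtype.coe_lt_coe]
          show (f ⟨s, by omega⟩ : ℕ → ℤ) < atuple u n i' j'
          rw [hf1]; exact hA
        have hB' : (⟨atuple u n i' j', hzmem⟩ : ↥(PL n u v)) < f ⟨s + 1, by omega⟩ := by
          rw [← Subtype.coe_lt_coe]
          show atuple u n i' j' < (f ⟨s + 1, by omega⟩ : ℕ → ℤ)
          rw [hf2]; exact hB
        exact hc.2 hA' hB'
      have hstep' := cover_classify n u v humono hvmono i2 i1 j2 j1
        hi2' hin2 hj21 hj22 hi1' hin1 hj11 hj12 hltt hmid
      refine ⟨i2, j2, hi2', hin2, hj21, hj22, hf2, ?_⟩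
      push_cast
      push_cast at hrk
      linarith
  obtain ⟨i2, j2, h1, h2, h3, h4, hf, hrk⟩ := key N le_rfl
  have hNl : (⟨N, by omega⟩ : Fin (N + 1)) = Fin.last N := rfl
  rw [hNl] at hf
  have he : atuple u n i2 j2 = atuple u n i j := by rw [← hf]; exact hlast
  obtain ⟨hii, hjj⟩ := atuple_inj n u i i2 j j2 hi1 hin hj1 h1 h2 h3 he
  omega

end LadderPaper
end
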